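/- Let p and q be positive integers and let N_{p,q} be the additive subgroup of ℤ × ℤ generated by (p, 0) and (−q, 2q). Then the minimum over all characters χ of A = (ℤ × ℤ)/N_{p,q} of |χ(v₁) + χ(v₂) + χ(v₁)χ(v₂)|² equals min{ g((2π/p)·⌊p/3⌋), g((2π/p)·⌈p/3⌉) }, where v₁ and v₂ are the images in A of (1,0) and (0,1). In particular this minimum is independent of q. -/

import Mathlib

set_option maxHeartbeats 1000000

open Real

/-- `g(θ) = 3 + 2cos θ − 4cos(θ/2)`. -/
noncomputable def gFun (θ : ℝ) : ℝ := 3 + 2 * cos θ - 4 * cos (θ / 2)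

lemma gFun_eq (θ : ℝ) : gFun θ = (2 * cos (θ / 2) - 1) ^ 2 := by
  have h : cos θ = 2 * cos (θ / 2) ^ 2 - 1 := by
    have h2 := Real.cos_two_mul (θ / 2)
    rw [show 2 * (θ / 2) = θ by ring] at h2
    linarith
  rw [gFun, h]; ring

lemma absSq (z w : ℂ) (hz : ‖z‖ = 1) (hw : ‖w‖ = 1) :
    ‖z + w + z * w‖ ^ 2
      = 3 + 2 * z.re + 2 * w.re + 2 * (z * (starRingEnd ℂ) w).re := by
  have hz' : z.re ^ 2 + z.im ^ 2 = 1 := by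
    have := Complex.sq_norm z
    rw [hz] at this
    simpa [Complex.normSq_apply, sq] using this.symm
  have hw' : w.re ^ 2 + w.im ^ 2 = 1 := by
    have := Complex.sq_norm w
    rw [hw] at this
    simpa [Complex.normSq_apply, sq] using this.symm
  rw [show ‖z + w + z * w‖ ^ 2 = Complex.normSq (z + w + z * w) from
    Complex.sq_norm _]
  simp only [Complex.normSq_apply, Complex.add_re, Complex.add_im, Complex.mul_re,
    Complex.mul_im, Complex.conj_re, Complex.conj_im]
  linear_combination (1 + w.re ^ 2 + w.im ^ 2 + 2 * w.re) * hz' + (2 + 2 * z.re) * hw'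

lemma abs_cos_add_int_mul_pi (x : ℝ) (n : ℤ) : |cos (x + n * π)| = |cos x| := by
  rw [← sq_eq_sq_iff_abs_eq_abs, Real.cos_sq, Real.cos_sq]
  congr 1
  rw [show 2 * (x + n * π) = 2 * x + n * (2 * π) by ring, Real.cos_add_int_mul_two_pi]

lemma red (p : ℕ) (hp : 0 < p) (k : ℤ) :
    ∃ m : ℤ, 0 ≤ m ∧ 2 * m ≤ p ∧ |cos (π * k / p)| = cos (π * m / p) := by
  have hp0 : (0:ℝ) < p := by exact_mod_cast hp
  have hpi := Real.pi_pos
  set m₀ : ℤ := k % (p:ℤ) with hm₀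
  have h0 : 0 ≤ m₀ := Int.emod_nonneg _ (by exact_mod_cast hp.ne')
  have h1 : m₀ < p := Int.emod_lt_of_pos _ (by exact_mod_cast hp)
  have hk : (k:ℝ) = p * ((k / (p:ℤ) : ℤ) : ℝ) + m₀ := by
    exact_mod_cast (Int.mul_ediv_add_emod k p).symm
  have hsplit : π * k / p = π * m₀ / p + ((k / (p:ℤ) : ℤ) : ℝ) * π := by
    rw [hk]; field_simp; ring
  have habs : |cos (π * k / p)| = |cos (π * m₀ / p)| := by
    rw [hsplit, abs_cos_add_int_mul_pi]
  by_cases hc : 2 * m₀ ≤ p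
  · refine ⟨m₀, h0, hc, ?_⟩
    rw [habs, abs_of_nonneg]
    apply Real.cos_nonneg_of_mem_Icc
    constructor
    · have h00 : (0:ℝ) ≤ π * m₀ / p := by
        apply div_nonneg _ hp0.le
        have : (0:ℝ) ≤ (m₀:ℝ) := by exact_mod_cast h0
        positivity
      linarith
    · rw [div_le_iff₀ hp0]
      have hm : (2 * m₀ : ℝ) ≤ p := by exact_mod_cast hc
      nlinarith
  · push_neg at hc
    refine ⟨p - m₀, by omega, by omega, ?_⟩
    have harg : π * ((p:ℤ) - m₀ : ℤ) / p = π - π * m₀ / p := by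
      push_cast; field_simp
    have hnp : cos (π * m₀ / p) ≤ 0 := by
      apply cos_nonpos_of_pi_div_two_le_of_le
      · rw [le_div_iff₀ hp0]
        have hm : (p:ℝ) < 2 * m₀ := by exact_mod_cast hc
        nlinarith
      · have h1' : (m₀ : ℝ) ≤ p := by exact_mod_cast h1.le
        have : π * m₀ / p ≤ π := by
          rw [div_le_iff₀ hp0]; nlinarith
        linarith
    rw [habs, harg, Real.cos_pi_sub, abs_of_nonpos hnp]

lemma final (p : ℕ) (hp : 0 < p) (m : ℤ) (h0 : 0 ≤ m) (h2 : 2 * m ≤ p) :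
    min (gFun (2 * π / p * (⌊(p : ℝ) / 3⌋ : ℤ))) (gFun (2 * π / p * (⌈(p : ℝ) / 3⌉ : ℤ)))
      ≤ (2 * cos (π * m / p) - 1) ^ 2 := by
  have hp0 : (0:ℝ) < p := by exact_mod_cast hp
  have hpi := Real.pi_pos
  set K₁ : ℤ := ⌊(p : ℝ) / 3⌋ with hK₁
  set K₂ : ℤ := ⌈(p : ℝ) / 3⌉ with hK₂
  have hg : ∀ K : ℤ, gFun (2 * π / p * K) = (2 * cos (π * K / p) - 1) ^ 2 := by
    intro K
    rw [gFun_eq, show (2 * π / p * K) / 2 = π * K / p by ring]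
  have hK₁le : (K₁ : ℝ) ≤ p / 3 := Int.floor_le _
  have hK₂ge : (p : ℝ) / 3 ≤ K₂ := Int.le_ceil _
  have hK₁0 : (0:ℝ) ≤ K₁ := by
    have : (0:ℤ) ≤ K₁ := Int.floor_nonneg.mpr (by positivity)
    exact_mod_cast this
  have hK₂p : (K₂ : ℝ) ≤ p := by
    have : K₂ ≤ (p:ℤ) := Int.ceil_le.mpr (by push_cast; linarith)
    exact_mod_cast this
  have hKle : K₂ ≤ K₁ + 1 := Int.ceil_le_floor_add_one _
  have hm0 : (0:ℝ) ≤ m := by exact_mod_cast h0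
  have hm2 : 2 * (m:ℝ) ≤ p := by exact_mod_cast h2
  have hpi3 : cos (π / 3) = 1 / 2 := Real.cos_pi_div_three
  by_cases hcase : m ≤ K₁
  · apply min_le_of_left_le
    rw [hg]
    have hmr : (m:ℝ) ≤ K₁ := by exact_mod_cast hcase
    have ha1 : π * m / p ≤ π * K₁ / p := by gcongr
    have ha2 : π * K₁ / p ≤ π / 3 := by
      rw [div_le_div_iff₀ hp0 (by norm_num : (0:ℝ) < 3)]
      nlinarith
    have hb1 : cos (π * K₁ / p) ≤ cos (π * m / p) :=
      Real.cos_le_cos_of_nonneg_of_le_pi (by positivity) (by linarith) ha1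
    have hb2 : (1:ℝ)/2 ≤ cos (π * K₁ / p) := by
      rw [← hpi3]
      exact Real.cos_le_cos_of_nonneg_of_le_pi (by positivity) (by linarith) ha2
    nlinarith
  · apply min_le_of_right_le
    rw [hg]
    push_neg at hcase
    have hcase2 : K₂ ≤ m := by omega
    have hmr : (K₂:ℝ) ≤ m := by exact_mod_cast hcase2
    have ha1 : π * K₂ / p ≤ π * m / p := by gcongr
    have hmpi : π * m / p ≤ π := by
      rw [div_le_iff₀ hp0]; nlinarith
    have ha2 : π / 3 ≤ π * K₂ / p := by
      rw [div_le_div_iff₀ (by norm_num : (0:ℝ) < 3) hp0]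
      nlinarith
    have hb1 : cos (π * m / p) ≤ cos (π * K₂ / p) :=
      Real.cos_le_cos_of_nonneg_of_le_pi (by positivity) hmpi ha1
    have hb2 : cos (π * K₂ / p) ≤ 1/2 := by
      rw [← hpi3]
      apply Real.cos_le_cos_of_nonneg_of_le_pi (by positivity) _ ha2
      rw [div_le_iff₀ hp0]; nlinarith
    nlinarith

lemma keyIneq (p : ℕ) (hp : 0 < p) (k : ℤ) (α β : ℝ) (hk : (p:ℝ) * α = 2 * π * k) :
    min (gFun (2 * π / p * (⌊(p : ℝ) / 3⌋ : ℤ))) (gFun (2 * π / p * (⌈(p : ℝ) / 3⌉ : ℤ)))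
      ≤ 3 + 2 * cos α + 2 * cos β + 2 * cos (α - β) := by
  have hp0 : (0:ℝ) < p := by exact_mod_cast hp
  have hhalf : α / 2 = π * k / p := by
    field_simp
    linarith
  have hcc := Real.cos_add_cos β (α - β)
  rw [show (β + (α - β)) / 2 = α / 2 by ring] at hcc
  set d := (β - (α - β)) / 2 with hd
  set c := cos (α / 2) with hc
  have h1 : -|c| ≤ c * cos d := by
    have h2 : |c * cos d| ≤ |c| := by
      rw [abs_mul]
      calc |c| * |cos d| ≤ |c| * 1 := by
            apply mul_le_mul_of_nonneg_left (abs_cos_le_one d) (abs_nonneg c)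
        _ = |c| := mul_one _
    linarith [neg_abs_le (c * cos d)]
  have hα : cos α = 2 * c ^ 2 - 1 := by
    rw [hc, ← Real.cos_two_mul, show 2 * (α / 2) = α by ring]
  have heq : (2 * |c| - 1) ^ 2 = 3 + 2 * cos α - 4 * |c| := by
    linear_combination 4 * sq_abs c - 2 * hα
  obtain ⟨m, hm0, hm2, hmeq⟩ := red p hp k
  have := final p hp m hm0 hm2
  rw [← hmeq, ← hhalf, ← hc] at this
  rw [heq] at this
  linarith

lemma mem_lemma (p q : ℕ) (hp : 0 < p) (hq : 0 < q) (k : ℤ) :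
    ∃ χ : (ℤ × ℤ) ⧸ (AddSubgroup.closure {((p : ℤ), (0 : ℤ)), (-(q : ℤ), 2 * (q : ℤ))}) → ℂ,
      (∀ x y, χ (x + y) = χ x * χ y) ∧ (∀ x, ‖χ x‖ = 1) ∧
      ‖χ (QuotientAddGroup.mk (1, 0)) + χ (QuotientAddGroup.mk (0, 1))
        + χ (QuotientAddGroup.mk (1, 0)) * χ (QuotientAddGroup.mk (0, 1))‖ ^ 2
        = gFun (2 * π / p * k) := by
  have hp0 : (0:ℝ) < p := by exact_mod_cast hp
  have hq0 : (0:ℝ) < q := by exact_mod_cast hq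
  set N : AddSubgroup (ℤ × ℤ) :=
    AddSubgroup.closure {((p : ℤ), (0 : ℤ)), (-(q : ℤ), 2 * (q : ℤ))} with hN
  set α : ℝ := 2 * π / p * k with hα
  set β : ℝ := α / 2 + π with hβ
  set φ : ℤ × ℤ → ℂ :=
    fun x => Complex.exp ((((x.1 : ℝ) * α + (x.2 : ℝ) * β : ℝ) : ℂ) * Complex.I) with hφ
  have hφadd : ∀ x y : ℤ × ℤ, φ (x + y) = φ x * φ y := by
    intro x y
    simp only [hφ, Prod.fst_add, Prod.snd_add, ← Complex.exp_add]
    congr 1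
    push_cast
    ring
  have hφneg : ∀ x : ℤ × ℤ, φ (-x) * φ x = 1 := by
    intro x
    rw [← hφadd]
    simp only [neg_add_cancel, hφ]
    norm_num
  have hφabs : ∀ x : ℤ × ℤ, ‖φ x‖ = 1 := fun x =>
    Complex.norm_exp_ofReal_mul_I _
  have hφN : ∀ x ∈ N, φ x = 1 := by
    intro x hx
    induction hx using AddSubgroup.closure_induction with
    | mem y hy =>
      have hpc : (p:ℂ) ≠ 0 := by exact_mod_cast hp.ne'
      rcases hy with hy | hy
      · rw [hy, hφ]
        apply Complex.exp_eq_one_iff.mpr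
        refine ⟨k, ?_⟩
        push_cast [hα]
        field_simp
        ring
      · simp only [Set.mem_singleton_iff] at hy
        rw [hy, hφ]
        apply Complex.exp_eq_one_iff.mpr
        refine ⟨(q:ℤ), ?_⟩
        push_cast [hβ]
        ring
    | zero => simp [hφ]
    | add y z _ _ hy hz => rw [hφadd, hy, hz, mul_one]
    | neg y _ hy =>
      have := hφneg y
      rw [hy] at this
      simpa using this
  have hwd : ∀ x y : ℤ × ℤ, (QuotientAddGroup.mk x : (ℤ×ℤ) ⧸ N) = QuotientAddGroup.mk y
      → φ x = φ y := by
    intro x y hxy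
    have h' : -x + y ∈ N := by
      rwa [QuotientAddGroup.eq] at hxy
    have h1 : φ (-x + y) = 1 := hφN _ h'
    rw [hφadd] at h1
    have h2 : φ (-x) * φ x = 1 := hφneg x
    have hnx0 : φ (-x) ≠ 0 := by
      intro h
      rw [h] at h2
      simpa using h2
    exact (mul_left_cancel₀ hnx0 (h1.trans h2.symm)).symm
  let χ : ((ℤ×ℤ) ⧸ N) → ℂ := fun a => Quotient.liftOn' a φ (fun x y h => by
    apply hwd
    exact Quotient.sound' h)
  have hχmk : ∀ x : ℤ × ℤ, χ (QuotientAddGroup.mk x) = φ x := fun x => rfl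
  refine ⟨χ, ?_, ?_, ?_⟩
  · intro a b
    induction a using Quotient.inductionOn' with | h x =>
    induction b using Quotient.inductionOn' with | h y =>
    show χ (QuotientAddGroup.mk x + QuotientAddGroup.mk y) = _
    rw [← QuotientAddGroup.mk_add, hχmk, hχmk, hχmk, hφadd]
  · intro a
    induction a using Quotient.inductionOn' with | h x =>
    exact hφabs x
  · rw [hχmk, hχmk]
    rw [absSq _ _ (hφabs _) (hφabs _)]
    have e1 : φ (1, 0) = Complex.exp ((α:ℂ) * Complex.I) := by
      rw [hφ]; norm_num
    have e2 : φ (0, 1) = Complex.exp ((β:ℂ) * Complex.I) := by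
      rw [hφ]; norm_num
    have e3 : (φ (1, 0)).re = cos α := by rw [e1, Complex.exp_ofReal_mul_I_re]
    have e4 : (φ (0, 1)).re = cos β := by rw [e2, Complex.exp_ofReal_mul_I_re]
    have e5 : φ (1, 0) * (starRingEnd ℂ) (φ (0, 1))
        = Complex.exp (((α - β : ℝ) : ℂ) * Complex.I) := by
      rw [e1, e2, ← Complex.exp_conj,
        show (starRingEnd ℂ) ((β:ℂ) * Complex.I) = -(β:ℂ) * Complex.I by simp,
        ← Complex.exp_add]
      congr 1
      push_cast
      ring
    have e6 : (φ (1, 0) * (starRingEnd ℂ) (φ (0, 1))).re = cos (α - β) := by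
      rw [e5, Complex.exp_ofReal_mul_I_re]
    rw [e3, e4, e6]
    have hβc : cos β = -cos (α / 2) := by rw [hβ, Real.cos_add_pi]
    have hαβ : cos (α - β) = -cos (α / 2) := by
      rw [show α - β = α / 2 - π by rw [hβ]; ring, Real.cos_sub_pi]
    show _ = gFun α
    rw [gFun, hβc, hαβ]
    ring

/-- Let `p, q` be positive integers and `N_{p,q} ≤ ℤ × ℤ` the subgroup
generated by `(p, 0)` and `(−q, 2q)`. The minimum over all characters `χ` of
`A = (ℤ × ℤ)/N_{p,q}` of `|χ(v₁) + χ(v₂) + χ(v₁)χ(v₂)|²`, where `v₁, v₂` are the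
images in `A` of `(1,0)` and `(0,1)`, equals
`min{ g((2π/p)·⌊p/3⌋), g((2π/p)·⌈p/3⌉) }`; in particular it is independent of `q`. -/
theorem stmt_18 (p q : ℕ) (hp : 0 < p) (hq : 0 < q) :
    let N : AddSubgroup (ℤ × ℤ) :=
      AddSubgroup.closure {((p : ℤ), (0 : ℤ)), (-(q : ℤ), 2 * (q : ℤ))}
    let A := (ℤ × ℤ) ⧸ N
    let v₁ : A := QuotientAddGroup.mk (1, 0)
    let v₂ : A := QuotientAddGroup.mk (0, 1)
    IsLeast
      {t : ℝ | ∃ χ : A → ℂ,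
        (∀ x y, χ (x + y) = χ x * χ y) ∧ (∀ x, ‖χ x‖ = 1) ∧
        t = ‖χ v₁ + χ v₂ + χ v₁ * χ v₂‖ ^ 2}
      (min (gFun (2 * π / p * (⌊(p : ℝ) / 3⌋ : ℤ)))
           (gFun (2 * π / p * (⌈(p : ℝ) / 3⌉ : ℤ)))) := by
  intro N A v₁ v₂
  constructor
  · -- membership
    rcases le_total (gFun (2 * π / p * (⌊(p : ℝ) / 3⌋ : ℤ)))
        (gFun (2 * π / p * (⌈(p : ℝ) / 3⌉ : ℤ))) with h | h
    · rw [min_eq_left h]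
      obtain ⟨χ, h1, h2, h3⟩ := mem_lemma p q hp hq ⌊(p : ℝ) / 3⌋
      exact ⟨χ, h1, h2, h3.symm⟩
    · rw [min_eq_right h]
      obtain ⟨χ, h1, h2, h3⟩ := mem_lemma p q hp hq ⌈(p : ℝ) / 3⌉
      exact ⟨χ, h1, h2, h3.symm⟩
  · -- lower bound
    rintro t ⟨χ, hmul, habs, rfl⟩
    -- χ 0 = 1
    have hne : χ (0:A) ≠ 0 := by
      intro hc
      have := habs 0
      rw [hc] at this
      simp at this
    have h0 : χ (0:A) = 1 := by
      have h := hmul 0 0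
      rw [add_zero] at h
      have h' : χ (0:A) * 1 = χ (0:A) * χ (0:A) := by rw [mul_one]; exact h
      exact (mul_left_cancel₀ hne h').symm
    have hpow : ∀ (n : ℕ) (x : A), χ (n • x) = χ x ^ n := by
      intro n x
      induction n with
      | zero => rw [zero_nsmul, h0, pow_zero]
      | succ n ih => rw [succ_nsmul, hmul, ih, pow_succ]
    -- z ^ p = 1
    have hmem : ((p : ℤ), (0 : ℤ)) ∈ N := AddSubgroup.subset_closure (by left; rfl)
    have hv : (p • v₁ : A) = 0 := by
      have h1 : (p • ((1:ℤ), (0:ℤ)) : ℤ × ℤ) = ((p:ℤ), (0:ℤ)) := by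
        simp [Prod.ext_iff]
      have : (QuotientAddGroup.mk (p • ((1:ℤ), (0:ℤ))) : A) = 0 := by
        rw [h1]
        exact (QuotientAddGroup.eq_zero_iff _).mpr hmem
      rw [← this]
      rfl
    have hzp : χ v₁ ^ p = 1 := by
      rw [← hpow, hv, h0]
    -- write χ v₁, χ v₂ as exponentials
    set α : ℝ := (χ v₁).arg with hαdef
    set β : ℝ := (χ v₂).arg with hβdef
    have hze : χ v₁ = Complex.exp ((α:ℂ) * Complex.I) := by
      conv_lhs => rw [← Complex.norm_mul_exp_arg_mul_I (χ v₁)]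
      rw [habs v₁]
      simp [hαdef]
    have hwe : χ v₂ = Complex.exp ((β:ℂ) * Complex.I) := by
      conv_lhs => rw [← Complex.norm_mul_exp_arg_mul_I (χ v₂)]
      rw [habs v₂]
      simp [hβdef]
    -- extract integer k with p * α = 2 π k
    have hexp1 : Complex.exp ((p:ℂ) * ((α:ℂ) * Complex.I)) = 1 := by
      rw [Complex.exp_nat_mul, ← hze, hzp]
    obtain ⟨n, hn⟩ := Complex.exp_eq_one_iff.mp hexp1
    have hreal : (p:ℝ) * α = 2 * π * n := by
      have h' : ((p * α : ℝ) : ℂ) * Complex.I = ((2 * π * n : ℝ) : ℂ) * Complex.I := by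
        push_cast
        push_cast at hn
        linear_combination hn
      have h'' := mul_right_cancel₀ Complex.I_ne_zero h'
      exact_mod_cast h''
    -- compute the value
    have e3 : (χ v₁).re = cos α := by rw [hze, Complex.exp_ofReal_mul_I_re]
    have e4 : (χ v₂).re = cos β := by rw [hwe, Complex.exp_ofReal_mul_I_re]
    have e5 : χ v₁ * (starRingEnd ℂ) (χ v₂)
        = Complex.exp (((α - β : ℝ) : ℂ) * Complex.I) := by
      rw [hze, hwe, ← Complex.exp_conj,
        show (starRingEnd ℂ) ((β:ℂ) * Complex.I) = -(β:ℂ) * Complex.I by simp,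
        ← Complex.exp_add]
      congr 1
      push_cast
      ring
    have e6 : (χ v₁ * (starRingEnd ℂ) (χ v₂)).re = cos (α - β) := by
      rw [e5, Complex.exp_ofReal_mul_I_re]
    rw [absSq _ _ (habs v₁) (habs v₂), e3, e4, e6]
    exact keyIneq p hp n α β hreal
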